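/- Let f₁, f₂ : [0,T] → ℝ be measurable functions possessing occupation-density local times L_h(f₁), L_h(f₂). Then for every ε > 0, sup_{h∈ℝ} |L_h(f₁) − L_h(f₂)| ≤ (T/ε²)·sup_{0≤t≤T}|f₁(t) − f₂(t)| + Σ_{i=1}^{2} sup_{h₁,h₂∈ℝ, |h₁−h₂|≤ε} |L_{h₁}(f_i) − L_{h₂}(f_i)|. -/

import Mathlib

open MeasureTheory

/-- `L` is the occupation-density local time of `f` on `[0,T]`: for every measurable
set of levels `A`, `∫_A L(h) dh` equals the Lebesgue measure of the times `t ∈ [0,T]`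
at which `f(t) ∈ A`. -/
def HasLocalTime (f : ℝ → ℝ) (T : ℝ) (L : ℝ → ℝ) : Prop :=
  ∀ A : Set ℝ, MeasurableSet A →
    (∫ h in A, L h) = (volume {t ∈ Set.Icc (0 : ℝ) T | f t ∈ A}).toReal

open Set ENNReal in
lemma hasLocalTime_integrable {f : ℝ → ℝ} {T : ℝ} (hT : 0 < T) {L : ℝ → ℝ}
    (hL : HasLocalTime f T L) : Integrable L := by
  by_contra hni
  have h0 := hL Set.univ MeasurableSet.univ
  have hset : {t ∈ Set.Icc (0 : ℝ) T | f t ∈ Set.univ} = Set.Icc (0 : ℝ) T := by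
    ext t; simp
  rw [hset, Real.volume_Icc, sub_zero, ENNReal.toReal_ofReal hT.le,
    Measure.restrict_univ, integral_undef hni] at h0
  linarith

open Set ENNReal in
lemma aux_one_sided (T : ℝ) (hT : 0 < T) (f₁ f₂ L₁ L₂ : ℝ → ℝ)
    (hf₂ : Measurable f₂)
    (hL₁ : HasLocalTime f₁ T L₁) (hL₂ : HasLocalTime f₂ T L₂)
    (ε : ℝ) (hε : 0 < ε) (M₀ M₁ M₂ : ℝ)
    (hM₀ : ∀ t ∈ Set.Icc (0 : ℝ) T, |f₁ t - f₂ t| ≤ M₀)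
    (hM₁ : ∀ h₁ h₂ : ℝ, |h₁ - h₂| ≤ ε → |L₁ h₁ - L₁ h₂| ≤ M₁)
    (hM₂ : ∀ h₁ h₂ : ℝ, |h₁ - h₂| ≤ ε → |L₂ h₁ - L₂ h₂| ≤ M₂)
    (h : ℝ) : L₁ h - L₂ h ≤ T / ε ^ 2 * M₀ + M₁ + M₂ := by
  have hM₀0 : 0 ≤ M₀ := le_trans (abs_nonneg _) (hM₀ 0 ⟨le_refl _, hT.le⟩)
  have hM₁0 : 0 ≤ M₁ := le_trans (abs_nonneg _) (hM₁ h h (by simp [hε.le]))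
  have hM₂0 : 0 ≤ M₂ := le_trans (abs_nonneg _) (hM₂ h h (by simp [hε.le]))
  have hTM₀ : 0 ≤ T / ε ^ 2 * M₀ :=
    mul_nonneg (div_nonneg hT.le (sq_nonneg ε)) hM₀0
  set X : ℝ := L₁ h - L₂ h - M₁ - M₂ with hX
  rcases le_or_gt X 0 with hX0 | hX0
  · linarith
  -- main case
  have hIntL₁ : Integrable L₁ := hasLocalTime_integrable hT hL₁
  have hIntL₂ : Integrable L₂ := hasLocalTime_integrable hT hL₂
  set K : Set ℝ := Set.Icc (h - M₀) (h + ε + M₀) \ Set.Icc h (h + ε) with hKdef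
  have hK : MeasurableSet K := measurableSet_Icc.diff measurableSet_Icc
  -- occupation measures
  set μ₁ : Set ℝ → ℝ≥0∞ := fun A => volume {t ∈ Set.Icc (0 : ℝ) T | f₁ t ∈ A} with hμ₁
  set μ₂ : Set ℝ → ℝ≥0∞ := fun A => volume {t ∈ Set.Icc (0 : ℝ) T | f₂ t ∈ A} with hμ₂
  have hfin₁ : ∀ A, μ₁ A ≤ ENNReal.ofReal T := by
    intro A
    calc μ₁ A ≤ volume (Set.Icc (0:ℝ) T) := measure_mono (Set.sep_subset _ _)
    _ = ENNReal.ofReal T := by rw [Real.volume_Icc, sub_zero]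
  have hfin₂ : ∀ A, μ₂ A ≤ ENNReal.ofReal T := by
    intro A
    calc μ₂ A ≤ volume (Set.Icc (0:ℝ) T) := measure_mono (Set.sep_subset _ _)
    _ = ENNReal.ofReal T := by rw [Real.volume_Icc, sub_zero]
  have hne₁ : ∀ A, μ₁ A ≠ ∞ := fun A => ne_top_of_le_ne_top ofReal_ne_top (hfin₁ A)
  have hne₂ : ∀ A, μ₂ A ≠ ∞ := fun A => ne_top_of_le_ne_top ofReal_ne_top (hfin₂ A)
  -- Step A : for every u ∈ [0, ε], ε·X ≤ μ₂(Sᵤ) where Sᵤ is the translated strip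
  have key : ∀ u ∈ Set.Icc (0 : ℝ) ε,
      ENNReal.ofReal (ε * X) ≤ μ₂ ((fun y => y + u) ⁻¹' K) := by
    intro u hu
    obtain ⟨hu0, huε⟩ := hu
    set Iu : Set ℝ := Set.Icc (h - u) (h + ε - u) with hIu
    have hIuMeas : MeasurableSet Iu := measurableSet_Icc
    have hvolIu : volume Iu = ENNReal.ofReal ε := by
      rw [hIu, Real.volume_Icc]; ring_nf
    have hvolIuReal : (volume Iu).toReal = ε := by
      rw [hvolIu, ENNReal.toReal_ofReal hε.le]
    have hclose : ∀ x ∈ Iu, |h - x| ≤ ε := by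
      intro x hx
      obtain ⟨hx1, hx2⟩ := hx
      rw [abs_le]; constructor <;> linarith
    have hconstInt : ∀ c : ℝ, IntegrableOn (fun _ => c) Iu volume := by
      intro c
      exact integrableOn_const (by rw [hvolIu]; exact ofReal_ne_top)
    -- A1
    have hA1 : ε * (L₁ h - M₁) ≤ (μ₁ Iu).toReal := by
      have h1 : ∫ x in Iu, (L₁ h - M₁) ∂volume ≤ ∫ x in Iu, L₁ x ∂volume := by
        refine setIntegral_mono_on (hconstInt _) hIntL₁.integrableOn hIuMeas ?_
        intro x hx
        have := (abs_le.1 (hM₁ h x (hclose x hx))).2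
        linarith [(abs_le.1 (hM₁ h x (hclose x hx))).1]
      rw [setIntegral_const, measureReal_def, hvolIuReal, smul_eq_mul] at h1
      rw [← hL₁ Iu hIuMeas]
      exact h1
    -- A2
    have hA2 : (μ₂ Iu).toReal ≤ ε * (L₂ h + M₂) := by
      have h1 : ∫ x in Iu, L₂ x ∂volume ≤ ∫ x in Iu, (L₂ h + M₂) ∂volume := by
        refine setIntegral_mono_on hIntL₂.integrableOn (hconstInt _) hIuMeas ?_
        intro x hx
        have := (abs_le.1 (hM₂ h x (hclose x hx))).1
        linarith
      rw [setIntegral_const, measureReal_def, hvolIuReal, smul_eq_mul] at h1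
      rw [← hL₂ Iu hIuMeas]
      exact h1
    -- A3 : μ₁ Iu ≤ μ₂ Iu + μ₂ Su
    set Su : Set ℝ := (fun y => y + u) ⁻¹' K with hSu
    have hA3 : μ₁ Iu ≤ μ₂ Iu + μ₂ Su := by
      have hsub : {t ∈ Set.Icc (0 : ℝ) T | f₁ t ∈ Iu} ⊆
          {t ∈ Set.Icc (0 : ℝ) T | f₂ t ∈ Iu} ∪ {t ∈ Set.Icc (0 : ℝ) T | f₂ t ∈ Su} := by
        intro t ht
        obtain ⟨htT, ht1⟩ := ht
        by_cases hmem : f₂ t ∈ Iu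
        · exact Or.inl ⟨htT, hmem⟩
        · refine Or.inr ⟨htT, ?_⟩
          have hd := abs_le.1 (hM₀ t htT)
          obtain ⟨hi1, hi2⟩ := ht1
          simp only [hSu, Set.mem_preimage, hKdef, Set.mem_diff, Set.mem_Icc]
          refine ⟨⟨by linarith [hd.1, hd.2], by linarith [hd.1, hd.2]⟩, ?_⟩
          intro hcon
          apply hmem
          rw [hIu, Set.mem_Icc]
          exact ⟨by linarith [hcon.1], by linarith [hcon.2]⟩
      calc μ₁ Iu ≤ volume ({t ∈ Set.Icc (0 : ℝ) T | f₂ t ∈ Iu} ∪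
          {t ∈ Set.Icc (0 : ℝ) T | f₂ t ∈ Su}) := measure_mono hsub
      _ ≤ μ₂ Iu + μ₂ Su := measure_union_le _ _
    have hA3' : (μ₁ Iu).toReal ≤ (μ₂ Iu).toReal + (μ₂ Su).toReal := by
      rw [← ENNReal.toReal_add (hne₂ Iu) (hne₂ Su)]
      exact ENNReal.toReal_mono (ENNReal.add_ne_top.2 ⟨hne₂ Iu, hne₂ Su⟩) hA3
    have hchain : ε * X ≤ (μ₂ Su).toReal := by
      have hexp : ε * X = ε * (L₁ h - M₁) - ε * (L₂ h + M₂) := by rw [hX]; ring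
      linarith
    exact ENNReal.ofReal_le_of_le_toReal hchain
  -- representation of μ₂ of translated strips as a lintegral
  have repr : ∀ u : ℝ, μ₂ ((fun y => y + u) ⁻¹' K)
      = ∫⁻ t in Set.Icc (0 : ℝ) T, K.indicator 1 (f₂ t + u) ∂volume := by
    intro u
    have hmeas : MeasurableSet (f₂ ⁻¹' ((fun y => y + u) ⁻¹' K)) :=
      hf₂ ((measurable_add_const u) hK)
    have hset : {t ∈ Set.Icc (0 : ℝ) T | f₂ t ∈ (fun y => y + u) ⁻¹' K}
        = f₂ ⁻¹' ((fun y => y + u) ⁻¹' K) ∩ Set.Icc (0 : ℝ) T := by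
      ext t; simp [and_comm]
    rw [hμ₂]
    simp only []
    rw [hset, ← Measure.restrict_apply hmeas, ← lintegral_indicator_one hmeas]
    congr 1
  -- pointwise bound after Fubini
  have inner : ∀ y : ℝ,
      ∫⁻ u in Set.Icc (0 : ℝ) ε, K.indicator 1 (y + u) ∂volume ≤ ENNReal.ofReal M₀ := by
    intro y
    have hpre : MeasurableSet ((fun u : ℝ => y + u) ⁻¹' K) := (measurable_const_add y) hK
    have heq : (fun u => K.indicator (1 : ℝ → ℝ≥0∞) (y + u))
        = fun u => ((fun u : ℝ => y + u) ⁻¹' K).indicator (1 : ℝ → ℝ≥0∞) u := by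
      ext u
      exact (Set.indicator_comp_right (g := (1 : ℝ → ℝ≥0∞)) (fun u : ℝ => y + u)).symm
    rw [heq, lintegral_indicator_one hpre, Measure.restrict_apply hpre]
    rcases le_or_gt y h with hyh | hyh
    · refine le_trans (measure_mono (?_ : _ ⊆ Set.Ico (h - y - M₀) (h - y))) ?_
      · intro u hu
        simp only [Set.mem_inter_iff, Set.mem_preimage, hKdef, Set.mem_diff,
          Set.mem_Icc, Set.mem_Ico, not_and, not_le] at hu ⊢
        obtain ⟨⟨⟨hk1, hk2⟩, hk3⟩, hu0, huε⟩ := hu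
        constructor
        · linarith
        · by_contra hcon
          push_neg at hcon
          have := hk3 (by linarith)
          linarith
      · rw [Real.volume_Ico]
        exact ENNReal.ofReal_le_ofReal (by linarith)
    · refine le_trans (measure_mono (?_ : _ ⊆ Set.Ioc (h + ε - y) (h + ε + M₀ - y))) ?_
      · intro u hu
        simp only [Set.mem_inter_iff, Set.mem_preimage, hKdef, Set.mem_diff,
          Set.mem_Icc, Set.mem_Ioc, not_and, not_le] at hu ⊢
        obtain ⟨⟨⟨hk1, hk2⟩, hk3⟩, hu0, huε⟩ := hu
        constructor
        · by_contra hcon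
          push_neg at hcon
          have : ¬ (h ≤ y + u) := by
            intro habs
            have := hk3 habs
            linarith
          push_neg at this
          linarith
        · linarith
      · rw [Real.volume_Ioc]
        exact ENNReal.ofReal_le_ofReal (by linarith)
  -- measurability for Fubini
  have Fmeas : Measurable (Function.uncurry fun (u t : ℝ) =>
      K.indicator (1 : ℝ → ℝ≥0∞) (f₂ t + u)) := by
    have hg : Measurable fun p : ℝ × ℝ => f₂ p.2 + p.1 :=
      (hf₂.comp measurable_snd).add measurable_fst
    exact (measurable_one.indicator hK).comp hg
  -- the averaging over u
  have main : ENNReal.ofReal (ε * X) * ENNReal.ofReal ε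
      ≤ ENNReal.ofReal M₀ * ENNReal.ofReal T := by
    calc ENNReal.ofReal (ε * X) * ENNReal.ofReal ε
        = ∫⁻ _ in Set.Icc (0 : ℝ) ε, ENNReal.ofReal (ε * X) ∂volume := by
          rw [setLIntegral_const, Real.volume_Icc, sub_zero]
      _ ≤ ∫⁻ u in Set.Icc (0 : ℝ) ε, μ₂ ((fun y => y + u) ⁻¹' K) ∂volume :=
          lintegral_mono_ae ((ae_restrict_iff' measurableSet_Icc).2 (ae_of_all _ key))
      _ = ∫⁻ u in Set.Icc (0 : ℝ) ε,
            ∫⁻ t in Set.Icc (0 : ℝ) T, K.indicator 1 (f₂ t + u) ∂volume ∂volume := by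
          simp_rw [repr]
      _ = ∫⁻ t in Set.Icc (0 : ℝ) T,
            ∫⁻ u in Set.Icc (0 : ℝ) ε, K.indicator 1 (f₂ t + u) ∂volume ∂volume :=
          lintegral_lintegral_swap Fmeas.aemeasurable
      _ ≤ ∫⁻ _ in Set.Icc (0 : ℝ) T, ENNReal.ofReal M₀ ∂volume :=
          lintegral_mono fun t => inner (f₂ t)
      _ = ENNReal.ofReal M₀ * ENNReal.ofReal T := by
          rw [setLIntegral_const, Real.volume_Icc, sub_zero]
  -- extraction
  have hεX : 0 ≤ ε * X := mul_nonneg hε.le hX0.le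
  rw [← ENNReal.ofReal_mul hεX, ← ENNReal.ofReal_mul hM₀0,
    ENNReal.ofReal_le_ofReal_iff (mul_nonneg hM₀0 hT.le)] at main
  have hε2 : (0 : ℝ) < ε ^ 2 := by positivity
  have hXle : X ≤ T / ε ^ 2 * M₀ := by
    rw [div_mul_eq_mul_div, le_div_iff₀ hε2]
    nlinarith [main]
  rw [hX] at hXle
  linarith

theorem stmt5 (T : ℝ) (hT : 0 < T) (f₁ f₂ L₁ L₂ : ℝ → ℝ)
    (hf₁ : Measurable f₁) (hf₂ : Measurable f₂)
    (hL₁ : HasLocalTime f₁ T L₁) (hL₂ : HasLocalTime f₂ T L₂)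
    (ε : ℝ) (hε : 0 < ε) (M₀ M₁ M₂ : ℝ)
    (hM₀ : ∀ t ∈ Set.Icc (0 : ℝ) T, |f₁ t - f₂ t| ≤ M₀)
    (hM₁ : ∀ h₁ h₂ : ℝ, |h₁ - h₂| ≤ ε → |L₁ h₁ - L₁ h₂| ≤ M₁)
    (hM₂ : ∀ h₁ h₂ : ℝ, |h₁ - h₂| ≤ ε → |L₂ h₁ - L₂ h₂| ≤ M₂) :
    ∀ h : ℝ, |L₁ h - L₂ h| ≤ T / ε ^ 2 * M₀ + M₁ + M₂ := by
  intro h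
  rw [abs_sub_le_iff]
  constructor
  · exact aux_one_sided T hT f₁ f₂ L₁ L₂ hf₂ hL₁ hL₂ ε hε M₀ M₁ M₂ hM₀ hM₁ hM₂ h
  · have := aux_one_sided T hT f₂ f₁ L₂ L₁ hf₁ hL₂ hL₁ ε hε M₀ M₂ M₁
      (fun t ht => by rw [abs_sub_comm]; exact hM₀ t ht) hM₂ hM₁ h
    linarith
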